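/- For every x ∈ ℝⁿ, H₁(x) + Q₂(x) = sup_{z ∈ Z₁} ⟨z, x⟩ and H₂(x) + Q₁(x) = sup_{z ∈ Z₂} ⟨z, x⟩; that is, the tropical polynomials H₁⊙Q₂ and H₂⊙Q₁ are the support functions of the zonotopes Z₁ and Z₂, respectively. -/

import Mathlib

open Matrix Finset Pointwise

/-- Entrywise positive part of a matrix. -/
noncomputable def matPos {p n : ℕ} (M : Matrix (Fin p) (Fin n) ℝ) : Matrix (Fin p) (Fin n) ℝ :=
  fun i j => max (M i j) 0

/-- Entrywise negative part of a matrix. -/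
noncomputable def matNeg {p n : ℕ} (M : Matrix (Fin p) (Fin n) ℝ) : Matrix (Fin p) (Fin n) ℝ :=
  fun i j => max (-(M i j)) 0

/-- The tropical polynomial `H_i`. -/
noncomputable def Hpoly {p n k : ℕ} (A : Matrix (Fin p) (Fin n) ℝ)
    (B : Matrix (Fin k) (Fin p) ℝ) (i : Fin k) (x : Fin n → ℝ) : ℝ :=
  ∑ j, (matPos B i j * max (matPos A j ⬝ᵥ x) (matNeg A j ⬝ᵥ x)
        + matNeg B i j * (matNeg A j ⬝ᵥ x))

/-- The tropical polynomial `Q_i`. -/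
noncomputable def Qpoly {p n k : ℕ} (A : Matrix (Fin p) (Fin n) ℝ)
    (B : Matrix (Fin k) (Fin p) ℝ) (i : Fin k) (x : Fin n → ℝ) : ℝ :=
  ∑ j, (matNeg B i j * max (matPos A j ⬝ᵥ x) (matNeg A j ⬝ᵥ x)
        + matPos B i j * (matNeg A j ⬝ᵥ x))

/-- The zonotope `Z_{ij}`: Minkowski sum of the line segments
`[(B⁺(i,m)+B⁻(j,m))·A⁺(m,:), (B⁺(i,m)+B⁻(j,m))·A⁻(m,:)]` shifted by
`(A⁻)ᵀ (B⁻(i,:)+B⁺(j,:))ᵀ`. -/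
noncomputable def zono {p n k : ℕ} (A : Matrix (Fin p) (Fin n) ℝ)
    (B : Matrix (Fin k) (Fin p) ℝ) (i j : Fin k) : Set (Fin n → ℝ) :=
  (∑ m : Fin p,
      segment ℝ ((matPos B i m + matNeg B j m) • matPos A m)
        ((matPos B i m + matNeg B j m) • matNeg A m))
    + ({fun t => ∑ m, matNeg A m t * (matNeg B i m + matPos B j m)} : Set (Fin n → ℝ))

lemma sumvec_dot {p n : ℕ} (g : Fin p → (Fin n → ℝ)) (x : Fin n → ℝ) :
    (∑ m, g m) ⬝ᵥ x = ∑ m, g m ⬝ᵥ x := by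
  simp [dotProduct, Finset.sum_apply, Finset.sum_mul]
  exact Finset.sum_comm

lemma key {p n k : ℕ} (A : Matrix (Fin p) (Fin n) ℝ)
    (B : Matrix (Fin k) (Fin p) ℝ) (i j : Fin k) (x : Fin n → ℝ) :
    Hpoly A B i x + Qpoly A B j x = sSup ((fun z => z ⬝ᵥ x) '' zono A B i j) := by
  set c : Fin p → ℝ := fun m => matPos B i m + matNeg B j m with hc
  set M : Fin p → ℝ := fun m => max (matPos A m ⬝ᵥ x) (matNeg A m ⬝ᵥ x) with hM
  set sft : Fin n → ℝ := fun t => ∑ m, matNeg A m t * (matNeg B i m + matPos B j m) with hsft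
  have hcnn : ∀ m, 0 ≤ c m := fun m => add_nonneg (le_max_right _ _) (le_max_right _ _)
  have hsftdot : sft ⬝ᵥ x = ∑ m, (matNeg B i m + matPos B j m) * (matNeg A m ⬝ᵥ x) := by
    simp only [hsft, dotProduct, Finset.sum_mul, Finset.mul_sum]
    rw [Finset.sum_comm]
    exact Finset.sum_congr rfl fun m _ => Finset.sum_congr rfl fun t _ => by ring
  have hLHS : Hpoly A B i x + Qpoly A B j x
      = (∑ m, c m * M m) + sft ⬝ᵥ x := by
    rw [hsftdot, Hpoly, Qpoly, ← Finset.sum_add_distrib, ← Finset.sum_add_distrib]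
    exact Finset.sum_congr rfl fun m _ => by simp only [hc, hM]; ring
  -- the maximizer
  set g : Fin p → (Fin n → ℝ) := fun m =>
    if matNeg A m ⬝ᵥ x ≤ matPos A m ⬝ᵥ x then c m • matPos A m else c m • matNeg A m with hg
  have hgmem : ∀ m, g m ∈ segment ℝ (c m • matPos A m) (c m • matNeg A m) := by
    intro m
    by_cases h : matNeg A m ⬝ᵥ x ≤ matPos A m ⬝ᵥ x
    · simp only [hg, if_pos h]; exact left_mem_segment ℝ _ _
    · simp only [hg, if_neg h]; exact right_mem_segment ℝ _ _
  have hgdot : ∀ m, g m ⬝ᵥ x = c m * M m := by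
    intro m
    by_cases h : matNeg A m ⬝ᵥ x ≤ matPos A m ⬝ᵥ x
    · simp only [hg, if_pos h, smul_dotProduct, smul_eq_mul, hM, max_eq_left h]
    · simp only [hg, if_neg h, smul_dotProduct, smul_eq_mul, hM,
        max_eq_right (le_of_not_ge h)]
  have hmem : ((∑ m, g m) + sft) ∈ zono A B i j := by
    refine Set.add_mem_add ?_ rfl
    rw [Set.mem_fintype_sum]
    exact ⟨g, hgmem, rfl⟩
  have hval : ((∑ m, g m) + sft) ⬝ᵥ x = (∑ m, c m * M m) + sft ⬝ᵥ x := by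
    rw [add_dotProduct, sumvec_dot]
    congr 1
    exact Finset.sum_congr rfl fun m _ => hgdot m
  have hub : ∀ y ∈ (fun z => z ⬝ᵥ x) '' zono A B i j,
      y ≤ (∑ m, c m * M m) + sft ⬝ᵥ x := by
    rintro y ⟨z, hz, rfl⟩
    obtain ⟨s, hs, t, ht, rfl⟩ := Set.mem_add.mp hz
    rw [Set.mem_singleton_iff] at ht
    subst ht
    rw [Set.mem_fintype_sum] at hs
    obtain ⟨f, hf, rfl⟩ := hs
    dsimp only
    rw [add_dotProduct, sumvec_dot]
    refine add_le_add_left (Finset.sum_le_sum fun m _ => ?_) _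
    obtain ⟨a, b, ha, hb, hab, heq⟩ := hf m
    rw [← heq, add_dotProduct, smul_dotProduct, smul_dotProduct, smul_dotProduct,
      smul_dotProduct]
    simp only [smul_eq_mul]
    have h1 : matPos A m ⬝ᵥ x ≤ M m := le_max_left _ _
    have h2 : matNeg A m ⬝ᵥ x ≤ M m := le_max_right _ _
    calc a * (c m * matPos A m ⬝ᵥ x) + b * (c m * matNeg A m ⬝ᵥ x)
        ≤ a * (c m * M m) + b * (c m * M m) :=
          add_le_add
            (mul_le_mul_of_nonneg_left (mul_le_mul_of_nonneg_left h1 (hcnn m)) ha)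
            (mul_le_mul_of_nonneg_left (mul_le_mul_of_nonneg_left h2 (hcnn m)) hb)
      _ = c m * M m := by rw [← add_mul, hab, one_mul]
  rw [hLHS]
  exact le_antisymm (le_csSup ⟨_, hub⟩ ⟨_, hmem, hval⟩)
    (csSup_le ⟨_, ⟨_, hmem, rfl⟩⟩ hub)

/-- `H₁ ⊙ Q₂` and `H₂ ⊙ Q₁` are the support functions of the zonotopes `Z₁` and `Z₂`. -/
theorem tropical_monomials_support_functions {p n : ℕ}
    (A : Matrix (Fin p) (Fin n) ℝ) (B : Matrix (Fin 2) (Fin p) ℝ) (x : Fin n → ℝ) :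
    Hpoly A B 0 x + Qpoly A B 1 x = sSup ((fun z => z ⬝ᵥ x) '' zono A B 0 1) ∧
    Hpoly A B 1 x + Qpoly A B 0 x = sSup ((fun z => z ⬝ᵥ x) '' zono A B 1 0) :=
  ⟨key A B 0 1 x, key A B 1 0 x⟩
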